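/- Let f be convex and k-uniformly convex with modulus λ on S with minimizer x*. Then for any x ∈ S, defining Δ = f(x) - f(x*) ≥ 0 and k* = k/(k-1), we have ‖∇f(x)‖^{k*} ≥ (λ/2)^{1/(k-1)} Δ. -/

import Mathlib

open Real
open RealInnerProductSpace

/-- for a k-uniformly convex f with minimizer x*, and k* = k/(k-1),
    ‖∇f(x)‖^{k*} ≥ (λ/2)^{1/(k-1)} (f(x) - f(x*)) for every x ∈ S. -/
theorem gradient_dominates_suboptimality
    {d : ℕ} (S : Set (EuclideanSpace ℝ (Fin d))) (hS : Convex ℝ S)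
    (f : EuclideanSpace ℝ (Fin d) → ℝ) (g : EuclideanSpace ℝ (Fin d) → EuclideanSpace ℝ (Fin d))
    (hdiff : ∀ x ∈ S, HasGradientAt f (g x) x)
    (lam k : ℝ) (hlam : 0 < lam) (hk : 2 ≤ k)
    (hUC : ∀ x ∈ S, ∀ y ∈ S,
      f y ≥ f x + ⟪g x, y - x⟫ + (lam / 2) * ‖x - y‖ ^ k)
    (xstar : EuclideanSpace ℝ (Fin d)) (hxstar : xstar ∈ S)
    (hmin : ∀ y ∈ S, f xstar ≤ f y) :
    ∀ x ∈ S, ‖g x‖ ^ (k / (k - 1)) ≥ (lam / 2) ^ (1 / (k - 1)) * (f x - f xstar) := by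
  intro x hx
  set G := ‖g x‖ with hGdef
  set r := ‖x - xstar‖ with hrdef
  set Δ := f x - f xstar with hΔdef
  have hΔ0 : 0 ≤ Δ := sub_nonneg.mpr (hmin x hx)
  have hk1 : (0:ℝ) < k - 1 := by linarith
  have hkpos : (0:ℝ) < k := by linarith
  have hGnn : 0 ≤ G := norm_nonneg _
  have hrnn : 0 ≤ r := norm_nonneg _
  have h1 : Δ + (lam/2) * r ^ k ≤ G * r := by
    have h := hUC x hx xstar hxstar
    have hin : ⟪g x, x - xstar⟫ ≤ G * r := real_inner_le_norm _ _
    have hneg : ⟪g x, xstar - x⟫ = -⟪g x, x - xstar⟫ := by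
      rw [← inner_neg_right]
      congr 1
      abel
    rw [hneg] at h
    linarith
  -- key inequality
  have key : (lam/2) * Δ ^ (k-1) ≤ G ^ k := by
    rcases eq_or_lt_of_le hΔ0 with hΔe | hΔp
    · have : Δ ^ (k-1) = 0 := by
        rw [← hΔe, Real.zero_rpow (ne_of_gt hk1)]
      rw [this, mul_zero]
      exact Real.rpow_nonneg hGnn k
    · have hrpos : 0 < r := by
        rcases lt_or_eq_of_le hrnn with h | h
        · exact h
        · exfalso
          have hr0 : r = 0 := h.symm
          rw [hr0] at h1
          rw [Real.zero_rpow (ne_of_gt hkpos)] at h1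
          simp at h1
          linarith
      have h2 : Δ ≤ G * r := by
        have : 0 ≤ (lam/2) * r ^ k := by positivity
        linarith
      have h3 : (lam/2) * r ^ (k-1) ≤ G := by
        have hrk : r ^ k = r ^ (k-1) * r := by
          rw [← Real.rpow_add_one (ne_of_gt hrpos)]
          ring_nf
        have : (lam/2) * (r ^ (k-1) * r) ≤ G * r := by
          rw [← hrk]; linarith
        have := (mul_le_mul_iff_of_pos_right hrpos).mp (by linarith [this] : ((lam/2) * r ^ (k-1)) * r ≤ G * r)
        exact this
      have h4 : Δ ^ (k-1) ≤ G ^ (k-1) * r ^ (k-1) := by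
        calc Δ ^ (k-1) ≤ (G * r) ^ (k-1) :=
              Real.rpow_le_rpow hΔ0 h2 (le_of_lt hk1)
          _ = G ^ (k-1) * r ^ (k-1) := Real.mul_rpow hGnn hrnn
      have hGk : G ^ k = G ^ (k-1) * G := by
        rw [← Real.rpow_add_one]
        · ring_nf
        · intro hG0
          rw [hG0] at h2
          nlinarith
      calc (lam/2) * Δ ^ (k-1) ≤ (lam/2) * (G ^ (k-1) * r ^ (k-1)) := by
            have hl2 : (0:ℝ) ≤ lam/2 := by positivity
            exact mul_le_mul_of_nonneg_left h4 hl2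
        _ = G ^ (k-1) * ((lam/2) * r ^ (k-1)) := by ring
        _ ≤ G ^ (k-1) * G := by
            have : (0:ℝ) ≤ G ^ (k-1) := Real.rpow_nonneg hGnn _
            exact mul_le_mul_of_nonneg_left h3 this
        _ = G ^ k := hGk.symm
  have hexp : k / (k-1) = k * (1/(k-1)) := by ring
  calc G ^ (k/(k-1)) = (G ^ k) ^ (1/(k-1)) := by
        rw [hexp, Real.rpow_mul hGnn]
    _ ≥ ((lam/2) * Δ ^ (k-1)) ^ (1/(k-1)) := by
        apply Real.rpow_le_rpow (by positivity) key (by positivity)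
    _ = (lam/2) ^ (1/(k-1)) * Δ := by
        rw [Real.mul_rpow (by positivity) (Real.rpow_nonneg hΔ0 _),
          ← Real.rpow_mul hΔ0, mul_one_div, div_self (ne_of_gt hk1), Real.rpow_one]
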